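/- Let A and B be nondegenerate one-dimensional Gaussians N(μ_1, σ_1^2), N(μ_2, σ_2^2) with d_TV(A,B) ≤ 1 - λ for a constant λ > 0. Then for every sufficiently small ε > 0 and for D ∈ {A, B}: P_{x~D}[ε ≤ A(x)/B(x) ≤ 1/ε] ≥ 1 - ε^{c(λ)} for some c(λ) > 0 depending only on λ. -/

import Mathlib

open MeasureTheory ProbabilityTheory

/-- Total variation distance between two measures. -/
noncomputable def tvDist {α : Type*} [MeasurableSpace α] (μ ν : Measure α) : ℝ :=
  ⨆ s : {s : Set α // MeasurableSet s}, |(μ s).toReal - (ν s).toReal|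

open Real Set




lemma abs_le_tvDist {α : Type*} [MeasurableSpace α] (μ ν : Measure α)
    [IsProbabilityMeasure μ] [IsProbabilityMeasure ν] {s : Set α} (hs : MeasurableSet s) :
    |(μ s).toReal - (ν s).toReal| ≤ tvDist μ ν := by
  refine le_ciSup (f := fun s : {s : Set α // MeasurableSet s} =>
    |(μ (s : Set α)).toReal - (ν (s : Set α)).toReal|) ?_ ⟨s, hs⟩
  refine ⟨1, ?_⟩
  rintro x ⟨t, rfl⟩
  have h1 : (μ (t : Set α)).toReal ≤ 1 := by
    have := prob_le_one (μ := μ) (s := (t : Set α))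
    simpa using ENNReal.toReal_mono (by simp) this
  have h2 : (ν (t : Set α)).toReal ≤ 1 := by
    have := prob_le_one (μ := ν) (s := (t : Set α))
    simpa using ENNReal.toReal_mono (by simp) this
  have h3 : 0 ≤ (μ (t : Set α)).toReal := ENNReal.toReal_nonneg
  have h4 : 0 ≤ (ν (t : Set α)).toReal := ENNReal.toReal_nonneg
  rw [abs_sub_le_iff]
  constructor <;> linarith

lemma tvDist_nonneg {α : Type*} [MeasurableSpace α] (μ ν : Measure α)
    [IsProbabilityMeasure μ] [IsProbabilityMeasure ν] : 0 ≤ tvDist μ ν := by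
  have := abs_le_tvDist μ ν MeasurableSet.empty
  simpa using this.trans' (abs_nonneg _)

lemma tvDist_comm {α : Type*} [MeasurableSpace α] (μ ν : Measure α) :
    tvDist μ ν = tvDist ν μ := by
  unfold tvDist
  congr 1
  ext s
  exact abs_sub_comm _ _



lemma pdf_shift_right (μ : ℝ) (v : NNReal) {a x : ℝ} (ha : 0 ≤ a) (hx : μ + a ≤ x) :
    gaussianPDFReal μ v x ≤ Real.exp (-a^2/(2*v)) * gaussianPDFReal (μ + a) v x := by
  unfold gaussianPDFReal
  rw [mul_left_comm]
  refine mul_le_mul_of_nonneg_left ?_ (by positivity)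
  rw [← Real.exp_add]
  refine Real.exp_le_exp.2 ?_
  rcases eq_or_ne v 0 with hv | hv
  · simp [hv]
  · have hv' : (0:ℝ) < v := by positivity
    rw [div_add_div _ _ (by positivity) (by positivity), div_le_div_iff₀ (by positivity) (by positivity)]
    nlinarith [mul_nonneg (mul_nonneg ha (by linarith : (0:ℝ) ≤ x - μ - a)) (mul_pos (by positivity : (0:ℝ) < 2*(v:ℝ)) (by positivity : (0:ℝ) < 2*(v:ℝ))).le]

lemma pdf_shift_left (μ : ℝ) (v : NNReal) {a x : ℝ} (ha : 0 ≤ a) (hx : x ≤ μ - a) :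
    gaussianPDFReal μ v x ≤ Real.exp (-a^2/(2*v)) * gaussianPDFReal (μ - a) v x := by
  unfold gaussianPDFReal
  rw [mul_left_comm]
  refine mul_le_mul_of_nonneg_left ?_ (by positivity)
  rw [← Real.exp_add]
  refine Real.exp_le_exp.2 ?_
  rcases eq_or_ne v 0 with hv | hv
  · simp [hv]
  · have hv' : (0:ℝ) < v := by positivity
    rw [div_add_div _ _ (by positivity) (by positivity), div_le_div_iff₀ (by positivity) (by positivity)]
    nlinarith [mul_nonneg (mul_nonneg ha (by linarith : (0:ℝ) ≤ μ - a - x)) (mul_pos (by positivity : (0:ℝ) < 2*(v:ℝ)) (by positivity : (0:ℝ) < 2*(v:ℝ))).le]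

lemma gaussian_tail_aux (μ : ℝ) {v : NNReal} (hv : v ≠ 0) {s : Set ℝ} (hs : MeasurableSet s)
    {C ν : ℝ} (hC : 0 ≤ C)
    (hpt : ∀ x ∈ s, gaussianPDFReal μ v x ≤ C * gaussianPDFReal ν v x) :
    gaussianReal μ v s ≤ ENNReal.ofReal C := by
  rw [gaussianReal_apply_eq_integral μ hv]
  refine ENNReal.ofReal_le_ofReal ?_
  calc ∫ x in s, gaussianPDFReal μ v x
      ≤ ∫ x in s, C * gaussianPDFReal ν v x := by
        refine setIntegral_mono_on (integrable_gaussianPDFReal μ v).integrableOn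
          ((integrable_gaussianPDFReal ν v).const_mul C).integrableOn hs hpt
    _ = C * ∫ x in s, gaussianPDFReal ν v x := by rw [integral_const_mul]
    _ ≤ C * ∫ x, gaussianPDFReal ν v x := by
        refine mul_le_mul_of_nonneg_left ?_ hC
        exact setIntegral_le_integral (integrable_gaussianPDFReal ν v)
          (ae_of_all _ fun x => gaussianPDFReal_nonneg ν v x)
    _ = C := by rw [integral_gaussianPDFReal_eq_one ν hv, mul_one]

lemma gaussian_tail (μ : ℝ) {v : NNReal} (hv : v ≠ 0) {a : ℝ} (ha : 0 ≤ a) :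
    gaussianReal μ v {x | a ≤ |x - μ|} ≤ ENNReal.ofReal (2 * Real.exp (-a^2/(2*v))) := by
  have hsub : {x : ℝ | a ≤ |x - μ|} ⊆ Iic (μ - a) ∪ Ici (μ + a) := by
    intro x hx
    simp only [mem_setOf_eq] at hx
    rcases abs_cases (x - μ) with ⟨h1, _⟩ | ⟨h1, _⟩
    · exact Or.inr (by simp only [mem_Ici]; rw [h1] at hx; linarith)
    · exact Or.inl (by simp only [mem_Iic]; rw [h1] at hx; linarith)
  calc gaussianReal μ v {x | a ≤ |x - μ|}
      ≤ gaussianReal μ v (Iic (μ - a) ∪ Ici (μ + a)) := measure_mono hsub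
    _ ≤ gaussianReal μ v (Iic (μ - a)) + gaussianReal μ v (Ici (μ + a)) := measure_union_le _ _
    _ ≤ ENNReal.ofReal (Real.exp (-a^2/(2*v))) + ENNReal.ofReal (Real.exp (-a^2/(2*v))) := by
        gcongr
        · exact gaussian_tail_aux μ hv measurableSet_Iic (le_of_lt (Real.exp_pos _))
            (fun x hx => pdf_shift_left μ v ha hx)
        · exact gaussian_tail_aux μ hv measurableSet_Ici (le_of_lt (Real.exp_pos _))
            (fun x hx => pdf_shift_right μ v ha hx)
    _ = ENNReal.ofReal (2 * Real.exp (-a^2/(2*v))) := by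
        rw [← ENNReal.ofReal_add (by positivity) (by positivity)]; ring_nf



lemma gaussian_interval (μ : ℝ) {v : NNReal} (hv : v ≠ 0) {c d : ℝ} (hcd : c ≤ d) :
    (gaussianReal μ v (Icc c d)).toReal ≤ (d - c) / (2 * Real.sqrt v) := by
  have hv' : (0:ℝ) < v := by positivity
  have hsv : (0:ℝ) < Real.sqrt v := Real.sqrt_pos.2 hv'
  have hpt : ∀ x ∈ Icc c d, gaussianPDFReal μ v x ≤ (2*Real.sqrt v)⁻¹ := by
    intro x _
    unfold gaussianPDFReal
    have h1 : Real.exp (-(x-μ)^2/(2*v)) ≤ 1 := Real.exp_le_one_iff.2 (div_nonpos_of_nonpos_of_nonneg (by nlinarith [sq_nonneg (x-μ)]) (by positivity))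
    have h2 : 2*Real.sqrt v ≤ Real.sqrt (2*π*v) := by
      rw [show (2:ℝ)*π*v = (2*π)*v by ring, Real.sqrt_mul (by positivity)]
      have : (2:ℝ) ≤ Real.sqrt (2*π) := by
        nlinarith [Real.sq_sqrt (by positivity : (0:ℝ) ≤ 2*π), Real.sqrt_nonneg (2*π), Real.pi_gt_three]
      nlinarith [Real.sqrt_nonneg ((v:ℝ))]
    calc (Real.sqrt (2*π*v))⁻¹ * Real.exp (-(x-μ)^2/(2*v)) ≤ (Real.sqrt (2*π*v))⁻¹ * 1 := by
          refine mul_le_mul_of_nonneg_left h1 (by positivity)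
      _ = (Real.sqrt (2*π*v))⁻¹ := mul_one _
      _ ≤ (2*Real.sqrt v)⁻¹ := by
          apply inv_anti₀ (by positivity) h2
  rw [gaussianReal_apply_eq_integral μ hv,
    ENNReal.toReal_ofReal (integral_nonneg (fun x => gaussianPDFReal_nonneg μ v x))]
  calc ∫ x in Icc c d, gaussianPDFReal μ v x
      ≤ ∫ _x in Icc c d, (2*Real.sqrt v)⁻¹ := by
        refine setIntegral_mono_on (integrable_gaussianPDFReal μ v).integrableOn
          (integrableOn_const measure_Icc_lt_top.ne) measurableSet_Icc hpt
    _ = (volume (Icc c d)).toReal * (2*Real.sqrt v)⁻¹ := by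
        rw [setIntegral_const]; rfl
    _ = (d - c) * (2*Real.sqrt v)⁻¹ := by
        rw [Real.volume_Icc, ENNReal.toReal_ofReal (by linarith)]
    _ = (d - c) / (2*Real.sqrt v) := (div_eq_mul_inv _ _).symm

lemma prob_toReal_compl {α : Type*} [MeasurableSpace α] (μ : Measure α) [IsProbabilityMeasure μ]
    {s : Set α} (hs : MeasurableSet s) : (μ s).toReal = 1 - (μ sᶜ).toReal := by
  have h := measure_add_measure_compl (μ := μ) hs
  rw [measure_univ] at h
  have h2 : (μ s).toReal + (μ sᶜ).toReal = 1 := by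
    rw [← ENNReal.toReal_add (measure_ne_top _ _) (measure_ne_top _ _), h, ENNReal.toReal_one]
  linarith





noncomputable def R0 (lam : ℝ) : ℝ := 1 + Real.sqrt (2 * Real.log (4 / lam))
noncomputable def Kc (lam : ℝ) : ℝ := 2 + Real.sqrt (8 * Real.log (4 / lam))
noncomputable def rho (lam : ℝ) : ℝ := lam / (2 * R0 lam)

lemma R0_pos {lam : ℝ} : 0 < R0 lam := by
  unfold R0; have := Real.sqrt_nonneg (2 * Real.log (4 / lam)); linarith

lemma log_four_div_nonneg {lam : ℝ} (hlam : 0 < lam) (hlam1 : lam ≤ 1) :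
    0 ≤ Real.log (4 / lam) := by
  apply Real.log_nonneg
  rw [le_div_iff₀ hlam]; linarith

lemma exp_R0 {lam : ℝ} (hlam : 0 < lam) (hlam1 : lam ≤ 1) :
    Real.exp (-(R0 lam)^2 / 2) ≤ lam / 4 := by
  have hl := log_four_div_nonneg hlam hlam1
  have hs := Real.sq_sqrt (by linarith : (0:ℝ) ≤ 2 * Real.log (4 / lam))
  have hsn := Real.sqrt_nonneg (2 * Real.log (4 / lam))
  have h1 : Real.log (4 / lam) ≤ (R0 lam)^2 / 2 := by
    unfold R0; nlinarith
  calc Real.exp (-(R0 lam)^2 / 2) ≤ Real.exp (-Real.log (4 / lam)) := by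
        apply Real.exp_le_exp.2; linarith
    _ = lam / 4 := by
        rw [Real.exp_neg, Real.exp_log (by positivity)]
        rw [inv_div]

lemma exp_Kc {lam : ℝ} (hlam : 0 < lam) (hlam1 : lam ≤ 1) :
    Real.exp (-(Kc lam)^2 / 8) ≤ lam / 4 := by
  have hl := log_four_div_nonneg hlam hlam1
  have hs := Real.sq_sqrt (by linarith : (0:ℝ) ≤ 8 * Real.log (4 / lam))
  have hsn := Real.sqrt_nonneg (8 * Real.log (4 / lam))
  have h1 : Real.log (4 / lam) ≤ (Kc lam)^2 / 8 := by
    unfold Kc; nlinarith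
  calc Real.exp (-(Kc lam)^2 / 8) ≤ Real.exp (-Real.log (4 / lam)) := by
        apply Real.exp_le_exp.2; linarith
    _ = lam / 4 := by
        rw [Real.exp_neg, Real.exp_log (by positivity), inv_div]

lemma rho_pos {lam : ℝ} (hlam : 0 < lam) : 0 < rho lam := by
  unfold rho; exact div_pos hlam (by have := R0_pos (lam := lam); linarith)

lemma toReal_tail_le (μ : ℝ) {v : NNReal} (hv : v ≠ 0) {a : ℝ} (ha : 0 ≤ a) {S : Set ℝ}
    (hsub : S ⊆ {x | a ≤ |x - μ|}) :
    ((gaussianReal μ v) S).toReal ≤ 2 * Real.exp (-a^2/(2*v)) := by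
  refine ENNReal.toReal_le_of_le_ofReal (by positivity) ?_
  exact (measure_mono hsub).trans (gaussian_tail μ hv ha)

lemma compl_Icc_subset (μ a : ℝ) : (Icc (μ - a) (μ + a))ᶜ ⊆ {x | a ≤ |x - μ|} := by
  intro x hx
  simp only [mem_compl_iff, mem_Icc, not_and_or, not_le] at hx
  simp only [mem_setOf_eq]
  rcases hx with h | h
  · rcases abs_cases (x - μ) with ⟨h1, _⟩ | ⟨h1, _⟩ <;> rw [h1] <;> linarith
  · rcases abs_cases (x - μ) with ⟨h1, _⟩ | ⟨h1, _⟩ <;> rw [h1] <;> linarith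

lemma var_ratio {lam : ℝ} (hlam : 0 < lam) (hlam1 : lam ≤ 1)
    {μ₁ μ₂ : ℝ} {v₁ v₂ : NNReal} (h₁ : v₁ ≠ 0) (h₂ : v₂ ≠ 0)
    (hTV : tvDist (gaussianReal μ₁ v₁) (gaussianReal μ₂ v₂) ≤ 1 - lam) :
    rho lam * Real.sqrt v₂ ≤ Real.sqrt v₁ := by
  have hv₁ : (0:ℝ) < v₁ := by positivity
  have hv₂ : (0:ℝ) < v₂ := by positivity
  set s₁ := Real.sqrt v₁ with hs₁def
  set s₂ := Real.sqrt v₂ with hs₂def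
  have hs₁ : 0 < s₁ := Real.sqrt_pos.2 hv₁
  have hs₂ : 0 < s₂ := Real.sqrt_pos.2 hv₂
  have hR := R0_pos (lam := lam)
  set a := R0 lam * s₁ with hadef
  have ha : 0 ≤ a := by positivity
  set S := Icc (μ₁ - a) (μ₁ + a) with hSdef
  have hSm : MeasurableSet S := measurableSet_Icc
  have hAc : ((gaussianReal μ₁ v₁) Sᶜ).toReal ≤ lam / 2 := by
    have h2 := toReal_tail_le μ₁ h₁ ha (compl_Icc_subset μ₁ a)
    have hsq : s₁^2 = (v₁:ℝ) := Real.sq_sqrt hv₁.le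
    have heq : -a^2/(2*(v₁:ℝ)) = -(R0 lam)^2/2 := by
      rw [hadef, mul_pow, hsq]; field_simp
    rw [heq] at h2
    have := exp_R0 hlam hlam1
    linarith
  have hA : 1 - lam/2 ≤ ((gaussianReal μ₁ v₁) S).toReal := by
    rw [prob_toReal_compl _ hSm]; linarith
  have hB : ((gaussianReal μ₂ v₂) S).toReal ≤ R0 lam * s₁ / s₂ := by
    calc ((gaussianReal μ₂ v₂) S).toReal ≤ ((μ₁+a) - (μ₁-a))/(2*s₂) :=
          gaussian_interval μ₂ h₂ (by linarith)
      _ = a / s₂ := by rw [show (μ₁+a) - (μ₁-a) = 2*a by ring, mul_div_mul_left _ _ (by norm_num : (2:ℝ) ≠ 0)]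
      _ = R0 lam * s₁ / s₂ := rfl
  have hd := (le_abs_self _).trans
    ((abs_le_tvDist (gaussianReal μ₁ v₁) (gaussianReal μ₂ v₂) hSm).trans hTV)
  have hfrac : lam / 2 ≤ R0 lam * s₁ / s₂ := by linarith
  rw [div_le_div_iff₀ (by norm_num) hs₂] at hfrac
  rw [rho, div_mul_eq_mul_div, div_le_iff₀ (by positivity)]
  nlinarith

lemma mean_bound {lam : ℝ} (hlam : 0 < lam) (hlam1 : lam ≤ 1)
    {μ₁ μ₂ : ℝ} {v₁ v₂ : NNReal} (h₁ : v₁ ≠ 0) (h₂ : v₂ ≠ 0)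
    (hTV : tvDist (gaussianReal μ₁ v₁) (gaussianReal μ₂ v₂) ≤ 1 - lam) :
    |μ₁ - μ₂| ≤ Kc lam * (Real.sqrt v₁ + Real.sqrt v₂) := by
  by_contra hcon
  push_neg at hcon
  have hv₁ : (0:ℝ) < v₁ := by positivity
  have hv₂ : (0:ℝ) < v₂ := by positivity
  set s₁ := Real.sqrt v₁ with hs₁def
  set s₂ := Real.sqrt v₂ with hs₂def
  have hs₁ : 0 < s₁ := Real.sqrt_pos.2 hv₁
  have hs₂ : 0 < s₂ := Real.sqrt_pos.2 hv₂
  have hK : (2:ℝ) ≤ Kc lam := by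
    unfold Kc; have := Real.sqrt_nonneg (8 * Real.log (4 / lam)); linarith
  set Δ := |μ₁ - μ₂| with hΔdef
  have hΔ : 0 < Δ := by nlinarith
  set S := Icc (μ₁ - Δ/2) (μ₁ + Δ/2) with hSdef
  have hSm : MeasurableSet S := measurableSet_Icc
  have hΔs₁ : Kc lam * s₁ < Δ := by nlinarith
  have hΔs₂ : Kc lam * s₂ < Δ := by nlinarith
  have hsq₁ : s₁^2 = (v₁:ℝ) := Real.sq_sqrt hv₁.le
  have hsq₂ : s₂^2 = (v₂:ℝ) := Real.sq_sqrt hv₂.le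
  have hAc : ((gaussianReal μ₁ v₁) Sᶜ).toReal < lam / 2 := by
    have h2 := toReal_tail_le μ₁ h₁ (by positivity : (0:ℝ) ≤ Δ/2) (compl_Icc_subset μ₁ (Δ/2))
    have hlt : Real.exp (-(Δ/2)^2/(2*(v₁:ℝ))) < Real.exp (-(Kc lam)^2/8) := by
      apply Real.exp_lt_exp.2
      rw [neg_div, neg_div, neg_lt_neg_iff, div_lt_div_iff₀ (by norm_num) (by positivity)]
      nlinarith [hsq₁, mul_pos (sub_pos.2 hΔs₁)
        (show (0:ℝ) < Δ + Kc lam * s₁ by nlinarith)]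
    have := exp_Kc hlam hlam1
    linarith
  have hA : 1 - lam/2 < ((gaussianReal μ₁ v₁) S).toReal := by
    rw [prob_toReal_compl _ hSm]; linarith
  have hB : ((gaussianReal μ₂ v₂) S).toReal < lam / 2 := by
    have hsub : S ⊆ {x | Δ/2 ≤ |x - μ₂|} := by
      intro x hx
      simp only [hSdef, mem_Icc] at hx
      simp only [mem_setOf_eq]
      have h3 : |x - μ₁| ≤ Δ/2 := abs_le.2 ⟨by linarith [hx.1], by linarith [hx.2]⟩
      have h4 : Δ ≤ |μ₁ - x| + |x - μ₂| := abs_sub_le μ₁ x μ₂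
      rw [abs_sub_comm μ₁ x] at h4
      linarith
    have h2 := toReal_tail_le μ₂ h₂ (by positivity : (0:ℝ) ≤ Δ/2) hsub
    have hlt : Real.exp (-(Δ/2)^2/(2*(v₂:ℝ))) < Real.exp (-(Kc lam)^2/8) := by
      apply Real.exp_lt_exp.2
      rw [neg_div, neg_div, neg_lt_neg_iff, div_lt_div_iff₀ (by norm_num) (by positivity)]
      nlinarith [hsq₂, mul_pos (sub_pos.2 hΔs₂)
        (show (0:ℝ) < Δ + Kc lam * s₂ by nlinarith)]
    have := exp_Kc hlam hlam1
    linarith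
  have hd := (le_abs_self _).trans
    ((abs_le_tvDist (gaussianReal μ₁ v₁) (gaussianReal μ₂ v₂) hSm).trans hTV)
  linarith



noncomputable def M1 (lam : ℝ) : ℝ := Real.log (1 / rho lam) + (Kc lam)^2 * (1 + 1/ rho lam)^2
noncomputable def M2 (lam : ℝ) : ℝ := 1/2 + 1/(rho lam)^2
noncomputable def cExp (lam : ℝ) : ℝ := 1/(4*M2 lam)
noncomputable def eps0 (lam : ℝ) : ℝ := Real.exp (-(3*M1 lam + M2 lam + 4*M2 lam*Real.log 2))



lemma rho_le_one {lam : ℝ} (hlam : 0 < lam) (hlam1 : lam ≤ 1) : rho lam ≤ 1 := by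
  unfold rho
  rw [div_le_one (by have := R0_pos (lam := lam); linarith)]
  have h1 : (1:ℝ) ≤ R0 lam := by
    unfold R0; have := Real.sqrt_nonneg (2 * Real.log (4 / lam)); linarith
  linarith

lemma M2_pos {lam : ℝ} (hlam : 0 < lam) : 0 < M2 lam := by
  have := rho_pos hlam; unfold M2; positivity

lemma M1_nonneg {lam : ℝ} (hlam : 0 < lam) (hlam1 : lam ≤ 1) : 0 ≤ M1 lam := by
  have h1 := rho_pos hlam
  have h2 := rho_le_one hlam hlam1
  unfold M1
  have h3 : 0 ≤ Real.log (1 / rho lam) :=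
    Real.log_nonneg ((one_le_div h1).2 h2)
  positivity

lemma ratio_eq {μ₁ μ₂ : ℝ} {v₁ v₂ : NNReal} (h₁ : v₁ ≠ 0) (h₂ : v₂ ≠ 0) (x : ℝ) :
    gaussianPDFReal μ₁ v₁ x / gaussianPDFReal μ₂ v₂ x =
      Real.exp (Real.log (Real.sqrt v₂ / Real.sqrt v₁)
        + ((x-μ₂)^2/(2*(v₂:ℝ)) - (x-μ₁)^2/(2*(v₁:ℝ)))) := by
  have hv₁ : (0:ℝ) < v₁ := by positivity
  have hv₂ : (0:ℝ) < v₂ := by positivity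
  have hs₁ : 0 < Real.sqrt v₁ := Real.sqrt_pos.2 hv₁
  have hs₂ : 0 < Real.sqrt v₂ := Real.sqrt_pos.2 hv₂
  have hpi : 0 < Real.sqrt (2*π) := Real.sqrt_pos.2 (by positivity)
  have e1 : Real.sqrt (2*π*(v₁:ℝ)) = Real.sqrt (2*π) * Real.sqrt v₁ :=
    Real.sqrt_mul (by positivity) _
  have e2 : Real.sqrt (2*π*(v₂:ℝ)) = Real.sqrt (2*π) * Real.sqrt v₂ :=
    Real.sqrt_mul (by positivity) _
  unfold gaussianPDFReal
  rw [Real.exp_add, Real.exp_log (by positivity), e1, e2, Real.exp_sub]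
  rw [neg_div, neg_div, Real.exp_neg, Real.exp_neg]
  have p1 := Real.exp_pos ((x-μ₁)^2/(2*(v₁:ℝ)))
  have p2 := Real.exp_pos ((x-μ₂)^2/(2*(v₂:ℝ)))
  field_simp




set_option maxHeartbeats 1000000 in
lemma key_bound {lam : ℝ} (hlam : 0 < lam) (hlam1 : lam ≤ 1)
    {μ₁ μ₂ : ℝ} {v₁ v₂ : NNReal} (h₁ : v₁ ≠ 0) (h₂ : v₂ ≠ 0)
    (hTV : tvDist (gaussianReal μ₁ v₁) (gaussianReal μ₂ v₂) ≤ 1 - lam)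
    {ε : ℝ} (hε : 0 < ε) (hε₀ : ε ≤ eps0 lam) :
    1 - Real.rpow ε (cExp lam) ≤
      ((gaussianReal μ₁ v₁) {x | ε ≤ gaussianPDFReal μ₁ v₁ x / gaussianPDFReal μ₂ v₂ x ∧
        gaussianPDFReal μ₁ v₁ x / gaussianPDFReal μ₂ v₂ x ≤ 1/ε}).toReal := by
  have hv₁ : (0:ℝ) < v₁ := by positivity
  have hv₂ : (0:ℝ) < v₂ := by positivity
  set s₁ := Real.sqrt v₁ with hs₁def
  set s₂ := Real.sqrt v₂ with hs₂def
  have hs₁ : 0 < s₁ := Real.sqrt_pos.2 hv₁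
  have hs₂ : 0 < s₂ := Real.sqrt_pos.2 hv₂
  have hsq₁ : s₁^2 = (v₁:ℝ) := Real.sq_sqrt hv₁.le
  have hsq₂ : s₂^2 = (v₂:ℝ) := Real.sq_sqrt hv₂.le
  set ρ := rho lam with hρdef
  have hρ : 0 < ρ := rho_pos hlam
  have hρ1 : ρ ≤ 1 := rho_le_one hlam hlam1
  have hr₁ : ρ * s₂ ≤ s₁ := var_ratio hlam hlam1 h₁ h₂ hTV
  have hr₂ : ρ * s₁ ≤ s₂ := var_ratio hlam hlam1 h₂ h₁ (by rw [tvDist_comm]; exact hTV)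
  have hΔ : |μ₁ - μ₂| ≤ Kc lam * (s₁ + s₂) := mean_bound hlam hlam1 h₁ h₂ hTV
  have hM1 := M1_nonneg hlam hlam1
  have hM2 := M2_pos hlam
  have hlog2 : (0:ℝ) ≤ Real.log 2 := Real.log_nonneg one_le_two
  set t := -Real.log ε with htdef
  have ht : 3*M1 lam + M2 lam + 4*M2 lam*Real.log 2 ≤ t := by
    have h := Real.log_le_log hε hε₀
    rw [eps0, Real.log_exp] at h
    rw [htdef]; linarith
  have hml : 0 ≤ M2 lam * Real.log 2 := mul_nonneg hM2.le hlog2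
  have htM1 : M1 lam ≤ t := by linarith
  have hrnn : (0:ℝ) ≤ (t - M1 lam)/M2 lam := div_nonneg (by linarith) hM2.le
  set r := Real.sqrt ((t - M1 lam)/ M2 lam) with hrdef
  have hrpos : 0 ≤ r := Real.sqrt_nonneg _
  have hr2 : r^2 = (t - M1 lam)/M2 lam := Real.sq_sqrt hrnn
  set a := r * s₁ with hadef
  have ha : 0 ≤ a := by positivity
  set G := Icc (μ₁ - a) (μ₁ + a) with hGdef
  have hGm : MeasurableSet G := measurableSet_Icc
  set Kl := Kc lam with hKdef
  have hKpos : 0 < Kl := by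
    rw [hKdef]; unfold Kc
    have := Real.sqrt_nonneg (8 * Real.log (4 / lam)); linarith
  have hsub : G ⊆ {x | ε ≤ gaussianPDFReal μ₁ v₁ x / gaussianPDFReal μ₂ v₂ x ∧
      gaussianPDFReal μ₁ v₁ x / gaussianPDFReal μ₂ v₂ x ≤ 1/ε} := by
    intro x hx
    simp only [hGdef, mem_Icc] at hx
    have hx1 : (x - μ₁)^2 ≤ r^2 * (v₁:ℝ) := by
      have habs : |x - μ₁| ≤ a := abs_le.2 ⟨by linarith [hx.1], by linarith [hx.2]⟩
      calc (x-μ₁)^2 = |x-μ₁|^2 := (sq_abs _).symm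
        _ ≤ a^2 := pow_le_pow_left₀ (abs_nonneg _) habs 2
        _ = r^2 * (v₁:ℝ) := by rw [hadef, mul_pow, hsq₁]
    have hx2 : (x - μ₂)^2 ≤ 2*r^2*(v₁:ℝ) + 2*Kl^2*(s₁+s₂)^2 := by
      have h5 : |x - μ₂| ≤ |x - μ₁| + |μ₁ - μ₂| := by
        have := abs_sub_le x μ₁ μ₂; linarith [abs_sub_comm x μ₁]
      have h7 : |x-μ₂|^2 ≤ (|x-μ₁| + |μ₁-μ₂|)^2 := pow_le_pow_left₀ (abs_nonneg _) h5 2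
      have h8 : |μ₁-μ₂|^2 ≤ (Kl*(s₁+s₂))^2 := pow_le_pow_left₀ (abs_nonneg _) hΔ 2
      rw [mul_pow] at h8
      have key : (|x-μ₁| + |μ₁-μ₂|)^2 ≤ 2*|x-μ₁|^2 + 2*|μ₁-μ₂|^2 := by
        nlinarith only [sq_nonneg (|x-μ₁| - |μ₁-μ₂|), abs_nonneg (x-μ₁), abs_nonneg (μ₁-μ₂)]
      calc (x-μ₂)^2 = |x-μ₂|^2 := (sq_abs _).symm
        _ ≤ (|x-μ₁| + |μ₁-μ₂|)^2 := h7
        _ ≤ 2*|x-μ₁|^2 + 2*|μ₁-μ₂|^2 := key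
        _ ≤ 2*r^2*(v₁:ℝ) + 2*Kl^2*(s₁+s₂)^2 := by
            have h9 := sq_abs (x-μ₁)
            linarith [hx1, h8]
    have hvv : ρ^2*(v₁:ℝ) ≤ (v₂:ℝ) := by
      have := pow_le_pow_left₀ (by positivity : (0:ℝ) ≤ ρ * s₁) hr₂ 2
      rw [mul_pow, hsq₁] at this
      rw [← hsq₂]; exact this
    have hss : s₁ + s₂ ≤ (1/ρ + 1)*s₂ := by
      have h9 : s₁ ≤ s₂/ρ := by rw [le_div_iff₀ hρ]; linarith [hr₂]
      have h10 : (1/ρ+1)*s₂ = s₂/ρ + s₂ := by field_simp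
      linarith
    have hT1 : (x-μ₁)^2/(2*(v₁:ℝ)) ≤ r^2/2 := by
      rw [div_le_div_iff₀ (by positivity) (by norm_num)]
      linarith only [hx1]
    have hT2 : (x-μ₂)^2/(2*(v₂:ℝ)) ≤ r^2/ρ^2 + Kl^2*(1+1/ρ)^2 := by
      have e1 : r^2*(v₁:ℝ)/(v₂:ℝ) ≤ r^2/ρ^2 := by
        rw [div_le_div_iff₀ (by positivity) (by positivity)]
        nlinarith only [sq_nonneg r, hvv]
      have e2 : Kl^2*(s₁+s₂)^2/(v₂:ℝ) ≤ Kl^2*(1+1/ρ)^2 := by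
        rw [div_le_iff₀ (by positivity)]
        have h9 : (s₁+s₂)^2 ≤ (1/ρ+1)^2*(v₂:ℝ) := by
          calc (s₁+s₂)^2 ≤ ((1/ρ+1)*s₂)^2 := pow_le_pow_left₀ (by positivity) hss 2
            _ = (1/ρ+1)^2*(v₂:ℝ) := by rw [mul_pow, hsq₂]
        calc Kl^2*(s₁+s₂)^2 ≤ Kl^2*((1/ρ+1)^2*(v₂:ℝ)) :=
              mul_le_mul_of_nonneg_left h9 (sq_nonneg _)
          _ = Kl^2*(1+1/ρ)^2*(v₂:ℝ) := by ring
      calc (x-μ₂)^2/(2*(v₂:ℝ)) ≤ (2*r^2*(v₁:ℝ) + 2*Kl^2*(s₁+s₂)^2)/(2*(v₂:ℝ)) := by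
            gcongr
        _ = r^2*(v₁:ℝ)/(v₂:ℝ) + Kl^2*(s₁+s₂)^2/(v₂:ℝ) := by ring
        _ ≤ r^2/ρ^2 + Kl^2*(1+1/ρ)^2 := add_le_add e1 e2
    have hL : |Real.log (s₂/s₁)| ≤ Real.log (1/ρ) := by
      rw [abs_le]
      have h10 : Real.log (1/ρ) = -Real.log ρ := by rw [one_div, Real.log_inv]
      constructor
      · have h11 : Real.log ρ ≤ Real.log (s₂/s₁) :=
          Real.log_le_log hρ (by rw [le_div_iff₀ hs₁]; linarith [hr₂])
        linarith
      · apply Real.log_le_log (by positivity)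
        rw [div_le_div_iff₀ hs₁ hρ]
        linarith only [hr₁]
    have hratio := ratio_eq (μ₁ := μ₁) (μ₂ := μ₂) h₁ h₂ x
    rw [← hs₁def, ← hs₂def] at hratio
    set L := Real.log (s₂/s₁) + ((x-μ₂)^2/(2*(v₂:ℝ)) - (x-μ₁)^2/(2*(v₁:ℝ))) with hLdef
    have hLb : |L| ≤ t := by
      have habs : |L| ≤ |Real.log (s₂/s₁)| +
          ((x-μ₁)^2/(2*(v₁:ℝ)) + (x-μ₂)^2/(2*(v₂:ℝ))) := by
        refine (abs_add_le _ _).trans (add_le_add_right ?_ _)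
        refine (abs_sub _ _).trans ?_
        rw [abs_of_nonneg (by positivity), abs_of_nonneg (by positivity)]
        linarith
      have hM : Real.log (1/ρ) + (r^2/2 + (r^2/ρ^2 + Kl^2*(1+1/ρ)^2)) =
          M1 lam + M2 lam * r^2 := by
        rw [hρdef, hKdef]; unfold M1 M2; ring
      have hMt : M1 lam + M2 lam * r^2 = t := by
        rw [hr2, mul_comm, div_mul_cancel₀ _ hM2.ne']; ring
      linarith
    have hLball := abs_le.1 hLb
    constructor
    · rw [hratio]
      calc ε = Real.exp (Real.log ε) := (Real.exp_log hε).symm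
        _ ≤ Real.exp L := Real.exp_le_exp.2 (by
            have := hLball.1; rw [htdef] at this; linarith)
    · rw [hratio]
      calc Real.exp L ≤ Real.exp (-Real.log ε) := Real.exp_le_exp.2 (by
            have := hLball.2; rw [htdef] at this; linarith)
        _ = 1/ε := by rw [Real.exp_neg, Real.exp_log hε, one_div]
  have hGc := toReal_tail_le μ₁ h₁ ha (compl_Icc_subset μ₁ a)
  have hexp : -a^2/(2*(v₁:ℝ)) = -(r^2/2) := by
    rw [hadef, mul_pow, hsq₁]; field_simp
  rw [hexp] at hGc
  have hfinal : 2*Real.exp (-(r^2/2)) ≤ Real.rpow ε (cExp lam) := by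
    rw [show Real.rpow ε (cExp lam) = Real.exp (Real.log ε * cExp lam) from
        Real.rpow_def_of_pos hε _,
      show (2:ℝ)*Real.exp (-(r^2/2)) = Real.exp (Real.log 2 + -(r^2/2)) by
        rw [Real.exp_add, Real.exp_log two_pos]]
    apply Real.exp_le_exp.2
    have hlogε : Real.log ε = -t := by rw [htdef]; ring
    rw [hlogε, hr2]
    unfold cExp
    have heq1 : Real.log 2 + -((t - M1 lam)/M2 lam/2) =
        (4*M2 lam*Real.log 2 - 2*(t - M1 lam))/(4*M2 lam) := by
      field_simp; ring
    have heq2 : -t * (1/(4*M2 lam)) = -t/(4*M2 lam) := by ring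
    rw [heq1, heq2]
    rw [div_le_div_iff_of_pos_right (show (0:ℝ) < 4*M2 lam by positivity)]
    linarith
  have hcompl := prob_toReal_compl (gaussianReal μ₁ v₁) hGm
  have hmono : ((gaussianReal μ₁ v₁) G).toReal ≤
      ((gaussianReal μ₁ v₁) {x | ε ≤ gaussianPDFReal μ₁ v₁ x / gaussianPDFReal μ₂ v₂ x ∧
        gaussianPDFReal μ₁ v₁ x / gaussianPDFReal μ₂ v₂ x ≤ 1/ε}).toReal :=
    ENNReal.toReal_mono (measure_ne_top _ _) (measure_mono hsub)
  linarith

lemma pair_inv {ε p : ℝ} (hε : 0 < ε) (hp : 0 < p) (h1 : ε ≤ p) (h2 : p ≤ 1/ε) :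
    ε ≤ p⁻¹ ∧ p⁻¹ ≤ 1/ε := by
  rw [one_div] at h2 ⊢
  constructor
  · have h3 := inv_anti₀ hp h2
    rwa [inv_inv] at h3
  · exact inv_anti₀ hε h1

/-- If `A = N(μ₁, σ₁²)` and `B = N(μ₂, σ₂²)` are nondegenerate one-dimensional Gaussians
with `d_TV(A,B) ≤ 1 - λ`, then for all sufficiently small `ε > 0` and `D ∈ {A, B}`:
`P_{x~D}[ε ≤ A(x)/B(x) ≤ 1/ε] ≥ 1 - ε^{c(λ)}` for some `c(λ) > 0` depending only on `λ`. -/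
theorem stmt15 (lam : ℝ) (hlam : 0 < lam) :
    ∃ c : ℝ, 0 < c ∧ ∃ ε₀ : ℝ, 0 < ε₀ ∧
      ∀ (μ₁ μ₂ : ℝ) (v₁ v₂ : NNReal), v₁ ≠ 0 → v₂ ≠ 0 →
        tvDist (gaussianReal μ₁ v₁) (gaussianReal μ₂ v₂) ≤ 1 - lam →
        ∀ ε : ℝ, 0 < ε → ε ≤ ε₀ →
        ∀ D : Measure ℝ, (D = gaussianReal μ₁ v₁ ∨ D = gaussianReal μ₂ v₂) →
          1 - Real.rpow ε c ≤
            (D {x | ε ≤ gaussianPDFReal μ₁ v₁ x / gaussianPDFReal μ₂ v₂ x ∧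
                gaussianPDFReal μ₁ v₁ x / gaussianPDFReal μ₂ v₂ x ≤ 1 / ε}).toReal := by
  refine ⟨cExp lam, ?_, eps0 lam, Real.exp_pos _, ?_⟩
  · have := M2_pos hlam
    unfold cExp
    positivity
  · intro μ₁ μ₂ v₁ v₂ h₁ h₂ hTV ε hε hε₀ D hD
    have hlam1 : lam ≤ 1 := by
      have h0 := tvDist_nonneg (gaussianReal μ₁ v₁) (gaussianReal μ₂ v₂)
      linarith
    rcases hD with rfl | rfl
    · exact key_bound hlam hlam1 h₁ h₂ hTV hε hε₀
    · have hswap := key_bound hlam hlam1 h₂ h₁ (by rw [tvDist_comm]; exact hTV) hε hε₀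
      have hsets : {x : ℝ | ε ≤ gaussianPDFReal μ₂ v₂ x / gaussianPDFReal μ₁ v₁ x ∧
          gaussianPDFReal μ₂ v₂ x / gaussianPDFReal μ₁ v₁ x ≤ 1/ε} =
          {x | ε ≤ gaussianPDFReal μ₁ v₁ x / gaussianPDFReal μ₂ v₂ x ∧
          gaussianPDFReal μ₁ v₁ x / gaussianPDFReal μ₂ v₂ x ≤ 1/ε} := by
        ext x
        have hA := gaussianPDFReal_pos μ₁ v₁ x h₁
        have hB := gaussianPDFReal_pos μ₂ v₂ x h₂
        have hinv1 : gaussianPDFReal μ₁ v₁ x / gaussianPDFReal μ₂ v₂ x =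
            (gaussianPDFReal μ₂ v₂ x / gaussianPDFReal μ₁ v₁ x)⁻¹ := (inv_div _ _).symm
        have hinv2 : gaussianPDFReal μ₂ v₂ x / gaussianPDFReal μ₁ v₁ x =
            (gaussianPDFReal μ₁ v₁ x / gaussianPDFReal μ₂ v₂ x)⁻¹ := (inv_div _ _).symm
        simp only [mem_setOf_eq]
        constructor
        · rintro ⟨ha, hb⟩
          rw [hinv1]
          exact pair_inv hε (div_pos hB hA) ha hb
        · rintro ⟨ha, hb⟩
          rw [hinv2]
          exact pair_inv hε (div_pos hA hB) ha hb
      rw [hsets] at hswap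
      exact hswap
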